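/- The k-cubic relations imply the (k−1)-cubic relations for k ≥ 1, for self-adjoint orthogonal matrices of generators: if a c_1⋯c_k b = 0 for all a ≠ b in the same row or column and all words c_1,...,c_k in the generators, then a c_1⋯c_{k−1} b = 0 likewise. -/
import Mathlib


open scoped BigOperators

/-- The word `u_{c₁} ⋯ u_{c_k}` in the generators. -/
def word {A : Type*} [Ring A] {n : ℕ} (u : Fin n → Fin n → A)
    {k : ℕ} (c : Fin k → Fin n × Fin n) : A :=
  (List.ofFn fun r => u (c r).1 (c r).2).prod

/-- The `k`-cubic relations: `a c₁ ⋯ c_k b = 0` whenever `a ≠ b` are entries on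
the same row or on the same column of `u`, and `c₁,…,c_k` are arbitrary
generators. -/
def KCubic {A : Type*} [Ring A] {n : ℕ} (u : Fin n → Fin n → A) (k : ℕ) : Prop :=
  ∀ c : Fin k → Fin n × Fin n,
    (∀ i j l, j ≠ l → u i j * word u c * u i l = 0) ∧
    (∀ i j l, j ≠ l → u j i * word u c * u l i = 0)

/-- Appending a letter to a word. -/
lemma word_snoc {A : Type*} [Ring A] {n : ℕ} (u : Fin n → Fin n → A) {k : ℕ}
    (c : Fin k → Fin n × Fin n) (p : Fin n × Fin n) :
    word u (Fin.snoc c p) = word u c * u p.1 p.2 := by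
  rw [word, word, List.ofFn_succ']
  simp [Fin.snoc_castSucc, Fin.snoc_last, List.prod_concat]

/-- For a matrix of self-adjoint generators that is orthogonal, the `k`-cubic
relations imply the `(k-1)`-cubic relations, for `k ≥ 1`. -/
theorem kCubic_imp_pred_kCubic {A : Type*} [Ring A] [StarRing A] {n : ℕ}
    (u : Fin n → Fin n → A)
    (hsa : ∀ i j, star (u i j) = u i j)
    (horth_row : ∀ i j, ∑ m, u i m * u j m = if i = j then (1 : A) else 0)
    (horth_col : ∀ i j, ∑ m, u m i * u m j = if i = j then (1 : A) else 0)
    (k : ℕ) (hk1 : 1 ≤ k) (hk : KCubic u k) : KCubic u (k - 1) := by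
  obtain ⟨k', rfl⟩ : ∃ k', k = k' + 1 := ⟨k - 1, (Nat.succ_pred_eq_of_pos hk1).symm⟩
  intro c
  constructor
  · -- row case : show u i j * word u c * u i l = 0 for j ≠ l
    intro i j l hjl
    -- key : u i j * word u c * u i l * u i j = 0
    have key : u i j * word u c * (u i l * u i j) = 0 := by
      have h0 : ∑ m, u i j * word u c * (u m l * u m j) = 0 := by
        rw [← Finset.mul_sum, horth_col l j, if_neg hjl.symm, mul_zero]
      have h1 : ∀ m ∈ Finset.univ, m ≠ i →
          u i j * word u c * (u m l * u m j) = (0 : A) := by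
        intro m _ hm
        have h := (hk (Fin.snoc c (m, l))).2 j i m (fun h => hm h.symm)
        rw [word_snoc] at h
        simpa only [mul_assoc] using h
      calc u i j * word u c * (u i l * u i j)
          = ∑ m, u i j * word u c * (u m l * u m j) :=
            (Finset.sum_eq_single_of_mem i (Finset.mem_univ i) h1).symm
        _ = 0 := h0
    have h3 : ∑ m, u i j * word u c * u i l * (u i m * u i m)
        = u i j * word u c * u i l := by
      rw [← Finset.mul_sum, horth_row i i, if_pos rfl, mul_one]
    rw [← h3]
    refine Finset.sum_eq_zero fun m _ => ?_
    by_cases hm : m = j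
    · rw [hm]
      calc u i j * word u c * u i l * (u i j * u i j)
          = (u i j * word u c * (u i l * u i j)) * u i j := by
            simp only [mul_assoc]
        _ = 0 := by rw [key, zero_mul]
    · have h := (hk (Fin.snoc c (i, l))).1 i j m (fun h => hm h.symm)
      rw [word_snoc] at h
      calc u i j * word u c * u i l * (u i m * u i m)
          = (u i j * (word u c * u i l) * u i m) * u i m := by
            simp only [mul_assoc]
        _ = 0 := by rw [h, zero_mul]
  · -- column case : show u j i * word u c * u l i = 0 for j ≠ l
    intro i j l hjl
    have key : u j i * word u c * (u l i * u j i) = 0 := by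
      have h0 : ∑ m, u j i * word u c * (u l m * u j m) = 0 := by
        rw [← Finset.mul_sum, horth_row l j, if_neg hjl.symm, mul_zero]
      have h1 : ∀ m ∈ Finset.univ, m ≠ i →
          u j i * word u c * (u l m * u j m) = (0 : A) := by
        intro m _ hm
        have h := (hk (Fin.snoc c (l, m))).1 j i m (fun h => hm h.symm)
        rw [word_snoc] at h
        simpa only [mul_assoc] using h
      calc u j i * word u c * (u l i * u j i)
          = ∑ m, u j i * word u c * (u l m * u j m) :=
            (Finset.sum_eq_single_of_mem i (Finset.mem_univ i) h1).symm
        _ = 0 := h0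
    have h3 : ∑ m, u j i * word u c * u l i * (u m i * u m i)
        = u j i * word u c * u l i := by
      rw [← Finset.mul_sum, horth_col i i, if_pos rfl, mul_one]
    rw [← h3]
    refine Finset.sum_eq_zero fun m _ => ?_
    by_cases hm : m = j
    · rw [hm]
      calc u j i * word u c * u l i * (u j i * u j i)
          = (u j i * word u c * (u l i * u j i)) * u j i := by
            simp only [mul_assoc]
        _ = 0 := by rw [key, zero_mul]
    · have h := (hk (Fin.snoc c (l, i))).2 i j m (fun h => hm h.symm)
      rw [word_snoc] at h
      calc u j i * word u c * u l i * (u m i * u m i)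
          = (u j i * (word u c * u l i) * u m i) * u m i := by
            simp only [mul_assoc]
        _ = 0 := by rw [h, zero_mul]
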